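/- Let h(x) = x·lg x + (1−x)·lg(1−x) for x ∈ (0,1), and define q : (0,1) → ℝ by q(ρ) = (1 + h(ρ))/(1−ρ) if ρ ∈ (1/3,1/2) ∪ (2/3,1), and q(ρ) = (1 + h(ρ))/ρ otherwise. Then q attains a strict minimum at ρ = 1/2: q(1/2) = 0, and q(ρ) > 0 for every ρ ∈ (0,1) with ρ ≠ 1/2. -/
import Mathlib

open scoped Classical

/-- The negative binary entropy `h(x) = x·lg x + (1−x)·lg(1−x)`. -/
noncomputable def negEntropy (x : ℝ) : ℝ :=
  x * Real.logb 2 x + (1 - x) * Real.logb 2 (1 - x)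

/-- The QuickMergesort penalty `q(ρ)` for exact `ρ`-quantile pivots (buffer `α = 1/2`). -/
noncomputable def qPenalty (ρ : ℝ) : ℝ :=
  if (1/3 < ρ ∧ ρ < 1/2) ∨ (2/3 < ρ ∧ ρ < 1) then (1 + negEntropy ρ) / (1 - ρ)
  else (1 + negEntropy ρ) / ρ

lemma negEntropy_eq (x : ℝ) : negEntropy x = -Real.binEntropy x / Real.log 2 := by
  simp [negEntropy, Real.binEntropy, Real.logb, Real.log_inv]
  field_simp
  ring

lemma one_add_negEntropy_pos {x : ℝ} (hx : x ≠ 1/2) : 0 < 1 + negEntropy x := by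
  rw [negEntropy_eq]
  have h2 : (0:ℝ) < Real.log 2 := Real.log_pos (by norm_num)
  have h := Real.binEntropy_lt_log_two.2 (by simpa [one_div] using hx)
  rw [← sub_pos] at h ⊢
  have : 1 + -Real.binEntropy x / Real.log 2 - 0
      = (Real.log 2 - Real.binEntropy x) / Real.log 2 := by field_simp; ring
  rw [this]
  exact div_pos (by linarith) h2

theorem qPenalty_strict_min :
    qPenalty (1/2) = 0 ∧
      ∀ ρ : ℝ, 0 < ρ → ρ < 1 → ρ ≠ 1/2 → 0 < qPenalty ρ := by
  constructor
  · have hl : Real.logb 2 (1/2 : ℝ) = -1 := by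
      rw [show (1/2:ℝ) = 2⁻¹ by norm_num, Real.logb_inv, Real.logb_self_eq_one] <;> norm_num
    have hn : negEntropy (1/2) = -1 := by
      unfold negEntropy
      rw [show (1:ℝ)-1/2 = 1/2 by norm_num, hl]; ring
    rw [qPenalty, if_neg (by norm_num), hn]
    norm_num
  · intro ρ h0 h1 hne
    have hnum := one_add_negEntropy_pos hne
    unfold qPenalty
    split
    · rename_i h
      rcases h with ⟨_, hlt⟩ | ⟨_, hlt⟩ <;> exact div_pos hnum (by linarith)
    · exact div_pos hnum h0
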